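/- Let 𝕂 be a non-discrete Hausdorff topological field, E and F Hausdorff topological 𝕂-vector spaces, U ⊆ E open, k ∈ ℕ∞ (ℕ₀ ∪ {∞}), and f : U → F of class C^k in the BGN sense. Let F₀ ⊆ F be a vector subspace containing the image of f. If F₀ is closed in F (or F₀ is sequentially closed and 𝕂 is metrizable), then the co-restriction f : U → F₀ is of class C^k as a map into the topological vector space F₀. -/

import Mathlib

universe u v

open Filter Topology

/-- BGN `C^n`-maps, defined recursively: `f : U → F` is `C⁰` if continuous on `U`, and
`C^{n+1}` if it is continuous and admits a difference-quotient map
`f¹ : U⁽¹⁾ → F` (satisfying `f(x+t•v) − f(x) = t • f¹(x,v,t)` on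
`U⁽¹⁾ = {(x,v,t) : x ∈ U, x+t•v ∈ U}`) which is itself of class `C^n` on `U⁽¹⁾`. -/
def IsBGNC (𝕂 : Type u) [Field 𝕂] [TopologicalSpace 𝕂]
    (F : Type v) [AddCommGroup F] [Module 𝕂 F] [TopologicalSpace F] :
    (n : ℕ) → (E : Type u) → [AddCommGroup E] → [Module 𝕂 E] → [TopologicalSpace E] →
      Set E → (E → F) → Prop
  | 0, _E, _, _, _, U, f => ContinuousOn f U
  | n + 1, E, _, _, _, U, f =>
      ContinuousOn f U ∧
      ∃ f1 : E × E × 𝕂 → F,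
        (∀ p : E × E × 𝕂, p.1 ∈ U → p.1 + p.2.2 • p.2.1 ∈ U →
          f (p.1 + p.2.2 • p.2.1) - f p.1 = p.2.2 • f1 p) ∧
        IsBGNC 𝕂 F n (E × E × 𝕂)
          {p : E × E × 𝕂 | p.1 ∈ U ∧ p.1 + p.2.2 • p.2.1 ∈ U} f1

/-- BGN `C^k`-maps for `k ∈ ℕ₀ ∪ {∞}`: `f` is `C^k` iff it is `C^n` for all natural `n ≤ k`. -/
def IsBGNCk (𝕂 : Type u) [Field 𝕂] [TopologicalSpace 𝕂]
    (F : Type v) [AddCommGroup F] [Module 𝕂 F] [TopologicalSpace F]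
    (k : ℕ∞) (E : Type u) [AddCommGroup E] [Module 𝕂 E] [TopologicalSpace E]
    (U : Set E) (f : E → F) : Prop :=
  ∀ n : ℕ, (n : ℕ∞) ≤ k → IsBGNC 𝕂 F n E U f


theorem isBGNC_continuousOn {𝕂 : Type u} [Field 𝕂] [TopologicalSpace 𝕂]
    {F : Type v} [AddCommGroup F] [Module 𝕂 F] [TopologicalSpace F]
    {n : ℕ} {E : Type u} [AddCommGroup E] [Module 𝕂 E] [TopologicalSpace E]
    {U : Set E} {f : E → F} (h : IsBGNC 𝕂 F n E U f) : ContinuousOn f U := by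
  cases n with
  | zero => exact h
  | succ n => exact h.1

theorem bgn_key {𝕂 : Type u} [Field 𝕂] [TopologicalSpace 𝕂] [IsTopologicalRing 𝕂]
    (hK : Dense {t : 𝕂 | t ≠ 0})
    {F : Type v} [AddCommGroup F] [Module 𝕂 F] [TopologicalSpace F]
    (F₀ : Submodule 𝕂 F)
    (hF₀ : IsClosed (F₀ : Set F) ∨
      (IsSeqClosed (F₀ : Set F) ∧ TopologicalSpace.MetrizableSpace 𝕂))
    (n : ℕ) :
    ∀ (E : Type u) [AddCommGroup E] [Module 𝕂 E] [TopologicalSpace E]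
      [IsTopologicalAddGroup E] [ContinuousSMul 𝕂 E],
      ∀ U : Set E, IsOpen U → ∀ f : E → F, (∀ x ∈ U, f x ∈ F₀) →
      IsBGNC 𝕂 F n E U f → ∀ g : E → F₀, (∀ x ∈ U, (g x : F) = f x) →
      IsBGNC 𝕂 F₀ n E U g := by
  classical
  induction n with
  | zero =>
    intro E _ _ _ _ _ U hU f hmem hf g hg
    show ContinuousOn g U
    rw [Topology.IsInducing.subtypeVal.continuousOn_iff]
    exact ContinuousOn.congr hf (fun x hx => hg x hx)
  | succ n ih =>
    intro E _ _ _ _ _ U hU f hmem hf g hg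
    obtain ⟨hc, f1, hdq, hf1⟩ := hf
    set S : Set (E × E × 𝕂) := {p : E × E × 𝕂 | p.1 ∈ U ∧ p.1 + p.2.2 • p.2.1 ∈ U} with hSdef
    have hS : IsOpen S := by
      apply IsOpen.inter (hU.preimage continuous_fst)
      exact hU.preimage (continuous_fst.add (continuous_snd.snd.smul continuous_snd.fst))
    -- values of f1 at points with t ≠ 0 lie in F₀
    have hne : ∀ q ∈ S, q.2.2 ≠ 0 → f1 q ∈ F₀ := by
      intro q hq ht
      have h1 : q.2.2 • f1 q ∈ F₀ := by
        rw [← hdq q hq.1 hq.2]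
        exact F₀.sub_mem (hmem _ hq.2) (hmem _ hq.1)
      have : f1 q = q.2.2⁻¹ • (q.2.2 • f1 q) := by
        rw [smul_smul, inv_mul_cancel₀ ht, one_smul]
      rw [this]
      exact F₀.smul_mem _ h1
    -- all values of f1 on S lie in F₀
    have hmem1 : ∀ q ∈ S, f1 q ∈ F₀ := by
      intro q hq
      rcases eq_or_ne q.2.2 0 with ht | ht
      · -- t = 0; approximate
        set φ : 𝕂 → E × E × 𝕂 := fun t => (q.1, q.2.1, t) with hφdef
        have hφq : φ q.2.2 = q := by
          simp [hφdef]
        have hφcont : Continuous φ := by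
          exact continuous_const.prodMk (continuous_const.prodMk continuous_id)
        have hfq : ContinuousAt f1 q := (isBGNC_continuousOn hf1).continuousAt (hS.mem_nhds hq)
        have hcomp : ContinuousAt (f1 ∘ φ) q.2.2 := by
          apply ContinuousAt.comp
          · rw [hφq]; exact hfq
          · exact hφcont.continuousAt
        have hVopen : IsOpen (φ ⁻¹' S) := hS.preimage hφcont
        have hVmem : q.2.2 ∈ φ ⁻¹' S := by
          rw [Set.mem_preimage, hφq]; exact hq
        have hVnhds : φ ⁻¹' S ∈ 𝓝 q.2.2 := hVopen.mem_nhds hVmem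
        have hmemA : ∀ t ∈ {t : 𝕂 | t ≠ 0} ∩ φ ⁻¹' S, f1 (φ t) ∈ F₀ := by
          intro t htt
          exact hne (φ t) htt.2 htt.1
        have hnb : (𝓝[{t : 𝕂 | t ≠ 0} ∩ φ ⁻¹' S] q.2.2).NeBot := by
          rw [nhdsWithin_inter_of_mem' (mem_nhdsWithin_of_mem_nhds hVnhds)]
          rw [← mem_closure_iff_nhdsWithin_neBot]
          rw [hK.closure_eq]
          trivial
        have htend : Filter.Tendsto (f1 ∘ φ) (𝓝[{t : 𝕂 | t ≠ 0} ∩ φ ⁻¹' S] q.2.2)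
            (𝓝 (f1 q)) := by
          have := hcomp.tendsto
          rw [Function.comp_apply, hφq] at this
          exact this.mono_left nhdsWithin_le_nhds
        have hev : ∀ᶠ t in 𝓝[{t : 𝕂 | t ≠ 0} ∩ φ ⁻¹' S] q.2.2, f1 (φ t) ∈ (F₀ : Set F) := by
          filter_upwards [self_mem_nhdsWithin] with t htt using hmemA t htt
        rcases hF₀ with hcl | ⟨hseq, hmetr⟩
        · exact hcl.mem_of_tendsto htend hev
        · -- sequential case
          haveI := hmetr
          haveI : TopologicalSpace.PseudoMetrizableSpace 𝕂 :=
            TopologicalSpace.MetrizableSpace.toPseudoMetrizableSpace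
          haveI : FirstCountableTopology 𝕂 :=
            TopologicalSpace.PseudoMetrizableSpace.firstCountableTopology
          have hq0 : q.2.2 ∈ closure ({t : 𝕂 | t ≠ 0} ∩ φ ⁻¹' S) := by
            rw [mem_closure_iff_nhdsWithin_neBot]; exact hnb
          obtain ⟨u, hu, hulim⟩ := mem_closure_iff_seq_limit.mp hq0
          have h1 : Filter.Tendsto (fun m => f1 (φ (u m))) Filter.atTop (𝓝 (f1 q)) := by
            have : Filter.Tendsto (f1 ∘ φ) (𝓝 q.2.2) (𝓝 (f1 q)) := by
              have := hcomp.tendsto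
              rw [Function.comp_apply, hφq] at this
              exact this
            exact this.comp hulim
          exact hseq (fun m => hmemA (u m) (hu m)) h1
      · exact hne q hq ht
    -- the corestricted difference quotient
    set g1 : E × E × 𝕂 → F₀ :=
      fun p => if h : f1 p ∈ F₀ then (⟨f1 p, h⟩ : F₀) else 0 with hg1def
    have hg1coe : ∀ p ∈ S, (g1 p : F) = f1 p := by
      intro p hp
      simp [hg1def, hmem1 p hp]
    refine ⟨?_, g1, ?_, ?_⟩
    · show ContinuousOn g U
      rw [Topology.IsInducing.subtypeVal.continuousOn_iff]
      exact ContinuousOn.congr hc (fun x hx => hg x hx)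
    · intro p h1 h2
      apply Subtype.ext
      push_cast
      rw [hg _ h1, hg _ h2, hg1coe p ⟨h1, h2⟩]
      exact hdq p h1 h2
    · exact ih (E × E × 𝕂) S hS f1 hmem1 hf1 g1 hg1coe

/-- Lemma 10.1 of Bertram–Glöckner–Neeb: if `f : U → F` is `C^k` in the BGN sense and its
image is contained in a vector subspace `F₀` which is closed (or sequentially closed with `𝕂`
metrizable), then the co-restriction `U → F₀` is `C^k` as a map into `F₀`. -/
theorem stmt_12 (𝕂 : Type u) [Field 𝕂] [TopologicalSpace 𝕂] [IsTopologicalRing 𝕂] [T2Space 𝕂]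
    (hK : Dense {t : 𝕂 | t ≠ 0})
    (E : Type u) (F : Type v) [AddCommGroup E] [Module 𝕂 E] [TopologicalSpace E]
    [IsTopologicalAddGroup E] [ContinuousSMul 𝕂 E] [T2Space E]
    [AddCommGroup F] [Module 𝕂 F] [TopologicalSpace F]
    [IsTopologicalAddGroup F] [ContinuousSMul 𝕂 F] [T2Space F]
    (U : Set E) (hU : IsOpen U) (k : ℕ∞) (f : E → F)
    (F₀ : Submodule 𝕂 F)
    (hF₀ : IsClosed (F₀ : Set F) ∨
      (IsSeqClosed (F₀ : Set F) ∧ TopologicalSpace.MetrizableSpace 𝕂))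
    (himg : ∀ x ∈ U, f x ∈ F₀)
    (hf : IsBGNCk 𝕂 F k E U f) :
    ∀ g : E → F₀, (∀ x ∈ U, (g x : F) = f x) → IsBGNCk 𝕂 F₀ k E U g := by
  intro g hg n hn
  exact bgn_key hK F₀ hF₀ n E U hU f himg (hf n hn) g hg
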